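/- Let ι_n : ℂ[S_n] → ℂ[S_{n+1}] be the algebra homomorphism induced by the standard embedding S_n ↪ S_{n+1} (extending each permutation of {1,…,n} by fixing n+1). Then ι_n maps Lie elements to Lie elements: ι_n(L_n) ⊆ L_{n+1}. -/

import Mathlib

/-- The wedge product `v₁ ∧ ⋯ ∧ vₘ` of a family of vectors, as an element of the `m`-th
exterior power `⋀[k]^m V`. -/
noncomputable def wedge (k : Type*) [Field k] (V : Type*) [AddCommGroup V] [Module k V]
    (m : ℕ) (v : Fin m → V) : ⋀[k]^m V :=
  ⟨ExteriorAlgebra.ιMulti k m v, ExteriorAlgebra.ιMulti_range k m (Set.mem_range_self v)⟩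

/-- The permutation representation of the symmetric group `S_n` on `ℂⁿ`: a permutation `σ`
sends the basis vector `xᵢ` to `x_{σ i}`, i.e. it acts on coordinate functions by
`(σ · v) i = v (σ⁻¹ i)`. -/
noncomputable def permRep (n : ℕ) : Representation ℂ (Equiv.Perm (Fin n)) (Fin n → ℂ) where
  toFun σ := LinearMap.funLeft ℂ ℂ ⇑σ⁻¹
  map_one' := by ext v i; simp [LinearMap.funLeft]
  map_mul' σ τ := by ext v i; simp [LinearMap.funLeft]

section Aux

variable (k : Type*) [Field k] (V : Type*) [AddCommGroup V] [Module k V]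

lemma wedge_coe (m : ℕ) (v : Fin m → V) :
    (wedge k V m v : ExteriorAlgebra k V) = ExteriorAlgebra.ιMulti k m v := rfl

lemma span_range_wedge (m : ℕ) :
    Submodule.span k (Set.range (wedge k V m)) = ⊤ := by
  apply Submodule.map_injective_of_injective (Submodule.injective_subtype (⋀[k]^m V))
  rw [Submodule.map_span, Submodule.map_subtype_top]
  have h : (⋀[k]^m V).subtype '' Set.range (wedge k V m)
      = Set.range (ExteriorAlgebra.ιMulti k m (M := V)) := by
    rw [← Set.range_comp]; rfl
  rw [h, ExteriorAlgebra.ιMulti_span_fixedDegree]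

noncomputable def wedgeAlt (m : ℕ) : V [⋀^Fin m]→ₗ[k] (⋀[k]^m V) :=
  AlternatingMap.codRestrict (ExteriorAlgebra.ιMulti k m) (⋀[k]^m V)
    (fun v => ExteriorAlgebra.ιMulti_range k m (Set.mem_range_self v))

lemma wedgeAlt_apply (m : ℕ) (v : Fin m → V) : wedgeAlt k V m v = wedge k V m v := rfl

lemma ιMulti_snoc {m : ℕ} (w : Fin m → V) (y : V) :
    ExteriorAlgebra.ιMulti k (m + 1) (Fin.snoc w y)
      = ExteriorAlgebra.ιMulti k m w * ExteriorAlgebra.ι k y := by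
  rw [ExteriorAlgebra.ιMulti_apply, ExteriorAlgebra.ιMulti_apply, List.ofFn_succ',
    List.concat_eq_append, List.prod_append, List.prod_singleton]
  congr 1
  · simp
  · simp

end Aux

lemma alt_ext_strictMono {k : Type*} [Field k] {N : ℕ} {W : Type*} [AddCommGroup W]
    [Module k W] {m : ℕ} {F G : (Fin N → k) [⋀^Fin m]→ₗ[k] W}
    (h : ∀ b : Fin m → Fin N, StrictMono b →
      F (fun p => Pi.single (b p) 1) = G (fun p => Pi.single (b p) 1)) : F = G := by
  classical
  apply Module.Basis.ext_alternating (Pi.basisFun k (Fin N))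
  intro v hv
  set σ := Tuple.sort v with hσ
  have hmono : StrictMono (v ∘ σ) :=
    (Tuple.monotone_sort v).strictMono_of_injective (hv.comp σ.injective)
  have hb := h (v ∘ σ) hmono
  have h1 : ∀ (H : (Fin N → k) [⋀^Fin m]→ₗ[k] W),
      H (fun i => (Pi.basisFun k (Fin N)) (v i))
        = Equiv.Perm.sign σ⁻¹ • H (fun p => Pi.single ((v ∘ σ) p) 1) := by
    intro H
    have h2 : (fun i => (Pi.basisFun k (Fin N)) (v i))
        = (fun p => Pi.single ((v ∘ σ) p) (1 : k)) ∘ ⇑σ⁻¹ := by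
      funext i; simp [Function.comp]
    rw [h2, AlternatingMap.map_perm]
  rw [h1 F, h1 G, hb]

lemma hat_decomp {G : Type*} [Monoid G] {M : Type*} [AddCommGroup M] [Module ℂ M]
    (F : MonoidAlgebra ℂ G →ₗ[ℂ] Module.End ℂ M) (f : G → Module.End ℂ M)
    (hF : ∀ g, F (MonoidAlgebra.single g 1) = f g) (y : MonoidAlgebra ℂ G) :
    F y = ∑ g ∈ y.coeff.support, y.coeff g • f g := by
  conv_lhs => rw [← MonoidAlgebra.sum_coeff_single y]
  rw [Finsupp.sum, map_sum]
  refine Finset.sum_congr rfl fun g _ => ?_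
  rw [← hF g, ← map_smul]
  congr 1
  rw [MonoidAlgebra.smul_single', mul_one]

noncomputable def inc (n : ℕ) : (Fin n → ℂ) →ₗ[ℂ] (Fin (n + 1) → ℂ) where
  toFun v := Fin.snoc v 0
  map_add' u v := by
    funext i
    cases i using Fin.lastCases <;> simp
  map_smul' c v := by
    funext i
    cases i using Fin.lastCases <;> simp

lemma permRep_apply {N : ℕ} (σ : Equiv.Perm (Fin N)) (v : Fin N → ℂ) (i : Fin N) :
    permRep N σ v i = v (σ⁻¹ i) := rfl

lemma inc_single {n : ℕ} (j : Fin n) :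
    inc n (Pi.single j 1) = Pi.single (Fin.castSucc j) (1 : ℂ) := by
  funext i
  cases i using Fin.lastCases with
  | last =>
    rw [Pi.single_eq_of_ne (Fin.ne_of_gt (Fin.castSucc_lt_last j))]
    simp [inc]
  | cast i => simp [inc, Pi.single_apply, Fin.castSucc_inj]

noncomputable def emb (n : ℕ) : Equiv.Perm (Fin n) →* Equiv.Perm (Fin (n + 1)) :=
  Equiv.Perm.viaEmbeddingHom Fin.castSuccEmb

lemma emb_castSucc {n : ℕ} (σ : Equiv.Perm (Fin n)) (i : Fin n) :
    emb n σ (Fin.castSucc i) = Fin.castSucc (σ i) := by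
  rw [emb, Equiv.Perm.viaEmbeddingHom_apply]
  exact σ.viaEmbedding_apply Fin.castSuccEmb i

lemma emb_last {n : ℕ} (σ : Equiv.Perm (Fin n)) : emb n σ (Fin.last n) = Fin.last n := by
  rw [emb, Equiv.Perm.viaEmbeddingHom_apply]
  refine σ.viaEmbedding_apply_of_notMem Fin.castSuccEmb (Fin.last n) ?_
  rintro ⟨j, hj⟩
  exact absurd hj (Fin.ne_of_lt (Fin.castSucc_lt_last j))

lemma emb_inv {n : ℕ} (σ : Equiv.Perm (Fin n)) : (emb n σ)⁻¹ = emb n σ⁻¹ :=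
  (map_inv (emb n) σ).symm

lemma permRep_emb_e {n : ℕ} (σ : Equiv.Perm (Fin n)) :
    permRep (n + 1) (emb n σ) (Pi.single (Fin.last n) 1) = Pi.single (Fin.last n) 1 := by
  funext i
  rw [permRep_apply, emb_inv]
  cases i using Fin.lastCases with
  | last => rw [emb_last]
  | cast j =>
    rw [emb_castSucc]
    rw [Pi.single_eq_of_ne (Fin.ne_of_lt (Fin.castSucc_lt_last _)),
      Pi.single_eq_of_ne (Fin.ne_of_lt (Fin.castSucc_lt_last _))]

lemma permRep_emb_inc {n : ℕ} (σ : Equiv.Perm (Fin n)) (v : Fin n → ℂ) :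
    permRep (n + 1) (emb n σ) (inc n v) = inc n (permRep n σ v) := by
  funext i
  rw [permRep_apply, emb_inv]
  cases i using Fin.lastCases with
  | last => rw [emb_last]; simp [inc]
  | cast j => rw [emb_castSucc]; simp [inc, permRep_apply]


set_option maxHeartbeats 1000000 in
/-- The algebra homomorphism `ι_n : ℂ[S_n] → ℂ[S_{n+1}]` induced by the standard embedding
`S_n ↪ S_{n+1}` (extending a permutation of `{1,…,n}` by fixing `n+1`) maps Lie elements to
Lie elements: `ι_n(L_n) ⊆ L_{n+1}`. -/
theorem statement9 (n : ℕ)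
    (A B : (m : ℕ) → Equiv.Perm (Fin n) → Module.End ℂ (⋀[ℂ]^m (Fin n → ℂ)))
    (hA : ∀ (m : ℕ) (σ : Equiv.Perm (Fin n)) (v : Fin m → (Fin n → ℂ)),
      A m σ (wedge ℂ (Fin n → ℂ) m v) = wedge ℂ (Fin n → ℂ) m fun p => permRep n σ (v p))
    (hB : ∀ (m : ℕ) (σ : Equiv.Perm (Fin n)) (v : Fin m → (Fin n → ℂ)),
      B m σ (wedge ℂ (Fin n → ℂ) m v) =
        ∑ p : Fin m, wedge ℂ (Fin n → ℂ) m (Function.update v p (permRep n σ (v p))))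
    (Ahat Bhat : (m : ℕ) →
      MonoidAlgebra ℂ (Equiv.Perm (Fin n)) →ₗ[ℂ] Module.End ℂ (⋀[ℂ]^m (Fin n → ℂ)))
    (hAhat : ∀ (m : ℕ) (σ : Equiv.Perm (Fin n)), Ahat m (MonoidAlgebra.single σ 1) = A m σ)
    (hBhat : ∀ (m : ℕ) (σ : Equiv.Perm (Fin n)), Bhat m (MonoidAlgebra.single σ 1) = B m σ)
    (A' B' : (m : ℕ) → Equiv.Perm (Fin (n + 1)) → Module.End ℂ (⋀[ℂ]^m (Fin (n + 1) → ℂ)))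
    (hA' : ∀ (m : ℕ) (σ : Equiv.Perm (Fin (n + 1))) (v : Fin m → (Fin (n + 1) → ℂ)),
      A' m σ (wedge ℂ (Fin (n + 1) → ℂ) m v) =
        wedge ℂ (Fin (n + 1) → ℂ) m fun p => permRep (n + 1) σ (v p))
    (hB' : ∀ (m : ℕ) (σ : Equiv.Perm (Fin (n + 1))) (v : Fin m → (Fin (n + 1) → ℂ)),
      B' m σ (wedge ℂ (Fin (n + 1) → ℂ) m v) =
        ∑ p : Fin m, wedge ℂ (Fin (n + 1) → ℂ) m (Function.update v p (permRep (n + 1) σ (v p))))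
    (Ahat' Bhat' : (m : ℕ) →
      MonoidAlgebra ℂ (Equiv.Perm (Fin (n + 1))) →ₗ[ℂ] Module.End ℂ (⋀[ℂ]^m (Fin (n + 1) → ℂ)))
    (hAhat' : ∀ (m : ℕ) (σ : Equiv.Perm (Fin (n + 1))),
      Ahat' m (MonoidAlgebra.single σ 1) = A' m σ)
    (hBhat' : ∀ (m : ℕ) (σ : Equiv.Perm (Fin (n + 1))),
      Bhat' m (MonoidAlgebra.single σ 1) = B' m σ) :
    let ι : MonoidAlgebra ℂ (Equiv.Perm (Fin n)) →ₐ[ℂ] MonoidAlgebra ℂ (Equiv.Perm (Fin (n + 1))) :=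
      MonoidAlgebra.mapDomainAlgHom ℂ ℂ (Equiv.Perm.viaEmbeddingHom Fin.castSuccEmb)
    ∀ x : MonoidAlgebra ℂ (Equiv.Perm (Fin n)),
      (∀ m ≤ n, Ahat m x = Bhat m x) →
      ∀ m ≤ n + 1, Ahat' m (ι x) = Bhat' m (ι x) := by
  intro ι x H m hm
  classical
  -- ι x as a sum of scaled singles
  have hιx : ι x = ∑ σ ∈ x.coeff.support, x.coeff σ • MonoidAlgebra.single (emb n σ) 1 := by
    conv_lhs => rw [← MonoidAlgebra.sum_coeff_single x]
    rw [Finsupp.sum, map_sum]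
    refine Finset.sum_congr rfl fun σ _ => ?_
    rw [MonoidAlgebra.smul_single', mul_one]
    exact MonoidAlgebra.mapDomain_single
  -- evaluation of Ahat' and Bhat' at ι x on wedges
  have hA'x : ∀ v : Fin m → (Fin (n + 1) → ℂ),
      Ahat' m (ι x) (wedge ℂ (Fin (n + 1) → ℂ) m v)
        = ∑ σ ∈ x.coeff.support, x.coeff σ •
            wedge ℂ (Fin (n + 1) → ℂ) m (fun p => permRep (n + 1) (emb n σ) (v p)) := by
    intro v
    rw [hιx, map_sum]
    rw [LinearMap.sum_apply]
    refine Finset.sum_congr rfl fun σ _ => ?_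
    rw [map_smul, LinearMap.smul_apply, hAhat', hA']
  have hB'x : ∀ v : Fin m → (Fin (n + 1) → ℂ),
      Bhat' m (ι x) (wedge ℂ (Fin (n + 1) → ℂ) m v)
        = ∑ σ ∈ x.coeff.support, x.coeff σ •
            ∑ q : Fin m, wedge ℂ (Fin (n + 1) → ℂ) m
              (Function.update v q (permRep (n + 1) (emb n σ) (v q))) := by
    intro v
    rw [hιx, map_sum]
    rw [LinearMap.sum_apply]
    refine Finset.sum_congr rfl fun σ _ => ?_
    rw [map_smul, LinearMap.smul_apply, hBhat', hB']
  -- the augmentation of x vanishes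
  have heps : (∑ σ ∈ x.coeff.support, x.coeff σ) = 0 := by
    have h0 := DFunLike.congr_fun (H 0 (Nat.zero_le n))
      (wedge ℂ (Fin n → ℂ) 0 (fun _ => 0))
    rw [hat_decomp (Ahat 0) (A 0) (hAhat 0) x, hat_decomp (Bhat 0) (B 0) (hBhat 0) x] at h0
    simp only [LinearMap.sum_apply, LinearMap.smul_apply, hA, hB] at h0
    have hw0 : ∀ v : Fin 0 → (Fin n → ℂ),
        wedge ℂ (Fin n → ℂ) 0 v = wedge ℂ (Fin n → ℂ) 0 (fun _ => 0) := by
      intro v; congr 1; exact Subsingleton.elim _ _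
    rw [Finset.sum_congr rfl (fun σ _ => by rw [hw0])] at h0
    simp only [Finset.univ_eq_empty, Finset.sum_empty, smul_zero, Finset.sum_const_zero,
      ← Finset.sum_smul] at h0
    have hcoe := congrArg Subtype.val h0
    simp only [SetLike.val_smul, ZeroMemClass.coe_zero, wedge_coe,
      ExteriorAlgebra.ιMulti_zero_apply, smul_eq_mul, mul_one] at hcoe
    have h1 : (∑ σ ∈ x.coeff.support, x.coeff σ) • (1 : ExteriorAlgebra ℂ (Fin n → ℂ)) = 0 := by
      simpa using hcoe
    rw [← Algebra.algebraMap_eq_smul_one, show (0 : ExteriorAlgebra ℂ (Fin n → ℂ))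
      = algebraMap ℂ _ 0 by rw [map_zero]] at h1
    exact (ExteriorAlgebra.algebraMap_inj (M := Fin n → ℂ) _ _).mp h1
  -- the transferred identity in the big exterior algebra
  have star : ∀ k, k ≤ n → ∀ u' : Fin k → (Fin n → ℂ),
      (∑ σ ∈ x.coeff.support, x.coeff σ • ExteriorAlgebra.ιMulti ℂ k
          (fun r => permRep (n + 1) (emb n σ) (inc n (u' r))))
        = ∑ σ ∈ x.coeff.support, x.coeff σ • ∑ r : Fin k, ExteriorAlgebra.ιMulti ℂ k
            (Function.update (fun j => inc n (u' j)) r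
              (permRep (n + 1) (emb n σ) (inc n (u' r)))) := by
    intro k hk u'
    have h0 := DFunLike.congr_fun (H k hk) (wedge ℂ (Fin n → ℂ) k u')
    rw [hat_decomp (Ahat k) (A k) (hAhat k) x, hat_decomp (Bhat k) (B k) (hBhat k) x] at h0
    simp only [LinearMap.sum_apply, LinearMap.smul_apply, hA, hB] at h0
    have h0c := congrArg Subtype.val h0
    simp only [AddSubmonoidClass.coe_finset_sum, SetLike.val_smul, wedge_coe] at h0c
    have h1 := congrArg (ExteriorAlgebra.map (inc n)).toLinearMap h0c
    simp only [map_sum, LinearMap.map_smul, AlgHom.toLinearMap_apply,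
      ExteriorAlgebra.map_apply_ιMulti] at h1
    have c1 : ∀ σ : Equiv.Perm (Fin n),
        (⇑(inc n) ∘ fun p => permRep n σ (u' p))
          = fun r => permRep (n + 1) (emb n σ) (inc n (u' r)) := by
      intro σ; funext r
      simp only [Function.comp_apply, permRep_emb_inc]
    have c2 : ∀ (σ : Equiv.Perm (Fin n)) (r : Fin k),
        (⇑(inc n) ∘ Function.update u' r (permRep n σ (u' r)))
          = Function.update (fun j => inc n (u' j)) r
              (permRep (n + 1) (emb n σ) (inc n (u' r))) := by
      intro σ r; funext j
      rcases eq_or_ne j r with rfl | hj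
      · simp only [Function.comp_apply, Function.update_self, permRep_emb_inc]
      · simp only [Function.comp_apply, Function.update_of_ne hj]
    simp only [c1, c2] at h1
    exact h1
  -- reduce to wedges of strictly monotone basis families
  have key : (Ahat' m (ι x)).compAlternatingMap (wedgeAlt ℂ (Fin (n + 1) → ℂ) m)
      = (Bhat' m (ι x)).compAlternatingMap (wedgeAlt ℂ (Fin (n + 1) → ℂ) m) := by
    apply alt_ext_strictMono
    intro b hb
    simp only [LinearMap.compAlternatingMap_apply, wedgeAlt_apply]
    by_cases hbl : ∀ p, b p ≠ Fin.last n
    · -- no slot uses the last coordinate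
      have hb'inj : Function.Injective fun p => (b p).castPred (hbl p) := by
        intro p q h
        apply hb.injective
        have h2 := congrArg Fin.castSucc h
        rwa [Fin.castSucc_castPred, Fin.castSucc_castPred] at h2
      have hmn : m ≤ n := by
        simpa using Fintype.card_le_of_injective _ hb'inj
      have hv0 : (fun p => Pi.single (b p) (1 : ℂ))
          = fun j => inc n (Pi.single ((b j).castPred (hbl j)) 1) := by
        funext j
        rw [inc_single, Fin.castSucc_castPred]
      simp only [hA'x, hB'x, hv0]
      apply Subtype.ext
      simp only [AddSubmonoidClass.coe_finset_sum, SetLike.val_smul, wedge_coe]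
      exact star m hmn _
    · -- exactly one slot (the final one) uses the last coordinate
      push_neg at hbl
      obtain ⟨p0, hp0⟩ := hbl
      have hmpos := p0.pos
      obtain ⟨k, rfl⟩ : ∃ k, m = k + 1 := ⟨m - 1, by omega⟩
      have hpl : p0 = Fin.last k := by
        by_contra hne
        have h1 : p0 < Fin.last k := lt_of_le_of_ne (Fin.le_last p0) hne
        have h2 := hb h1
        rw [hp0] at h2
        exact absurd h2 (not_lt.2 (Fin.le_last _))
      rw [hpl] at hp0
      have hbc : ∀ r : Fin k, b (Fin.castSucc r) ≠ Fin.last n := by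
        intro r
        have h1 : b (Fin.castSucc r) < Fin.last n := hp0 ▸ hb (Fin.castSucc_lt_last r)
        exact Fin.ne_of_lt h1
      have hb'inj : Function.Injective fun r => (b (Fin.castSucc r)).castPred (hbc r) := by
        intro r s h
        have h2 := congrArg Fin.castSucc h
        rw [Fin.castSucc_castPred, Fin.castSucc_castPred] at h2
        exact Fin.castSucc_injective _ (hb.injective h2)
      have hkn : k ≤ n := by
        simpa using Fintype.card_le_of_injective _ hb'inj
      set u' : Fin k → (Fin n → ℂ) :=
        fun r => Pi.single ((b (Fin.castSucc r)).castPred (hbc r)) 1 with hu'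
      have hsnoc : (fun p => Pi.single (b p) (1 : ℂ))
          = (Fin.snoc (fun j => inc n (u' j)) (Pi.single (Fin.last n) 1) :
              Fin (k + 1) → (Fin (n + 1) → ℂ)) := by
        funext q
        cases q using Fin.lastCases with
        | last => simp only [Fin.snoc_last, hp0]
        | cast r =>
          simp only [Fin.snoc_castSucc, hu', inc_single, Fin.castSucc_castPred]
      simp only [hA'x, hB'x, hsnoc]
      apply Subtype.ext
      simp only [AddSubmonoidClass.coe_finset_sum, SetLike.val_smul, wedge_coe]
      -- per-σ computation of the left-hand side
      have L1 : ∀ σ : Equiv.Perm (Fin n),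
          ExteriorAlgebra.ιMulti ℂ (k + 1) (fun q => permRep (n + 1) (emb n σ)
              ((Fin.snoc (fun j => inc n (u' j)) (Pi.single (Fin.last n) 1) : Fin (k + 1) → (Fin (n + 1) → ℂ)) q))
            = ExteriorAlgebra.ιMulti ℂ k (fun r => permRep (n + 1) (emb n σ) (inc n (u' r)))
                * ExteriorAlgebra.ι ℂ (Pi.single (Fin.last n) 1) := by
        intro σ
        rw [← ιMulti_snoc]
        congr 1
        funext q
        cases q using Fin.lastCases with
        | last => simp only [Fin.snoc_last, permRep_emb_e]
        | cast r => simp only [Fin.snoc_castSucc]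
      -- per-σ computation of the right-hand side
      have R1 : ∀ σ : Equiv.Perm (Fin n),
          (∑ q : Fin (k + 1), ExteriorAlgebra.ιMulti ℂ (k + 1)
              (Function.update ((Fin.snoc (fun j => inc n (u' j)) (Pi.single (Fin.last n) 1) : Fin (k + 1) → (Fin (n + 1) → ℂ))) q
                (permRep (n + 1) (emb n σ)
                  ((Fin.snoc (fun j => inc n (u' j)) (Pi.single (Fin.last n) 1) : Fin (k + 1) → (Fin (n + 1) → ℂ)) q))))
            = (∑ r : Fin k, ExteriorAlgebra.ιMulti ℂ k
                (Function.update (fun j => inc n (u' j)) r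
                  (permRep (n + 1) (emb n σ) (inc n (u' r)))))
                  * ExteriorAlgebra.ι ℂ (Pi.single (Fin.last n) 1)
                + ExteriorAlgebra.ιMulti ℂ (k + 1)
                    ((Fin.snoc (fun j => inc n (u' j)) (Pi.single (Fin.last n) 1) : Fin (k + 1) → (Fin (n + 1) → ℂ))) := by
        intro σ
        rw [Fin.sum_univ_castSucc, Finset.sum_mul]
        congr 1
        · refine Finset.sum_congr rfl fun r _ => ?_
          rw [← ιMulti_snoc]
          congr 1
          simp only [Fin.snoc_castSucc, Fin.snoc_update]
        · simp only [Fin.snoc_last, permRep_emb_e, Fin.update_snoc_last]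
      simp only [L1, R1, smul_add]
      rw [Finset.sum_add_distrib, ← Finset.sum_smul, heps, zero_smul, add_zero]
      simp only [← smul_mul_assoc]
      rw [← Finset.sum_mul, ← Finset.sum_mul, star k hkn u']
  apply LinearMap.ext_on (span_range_wedge ℂ (Fin (n + 1) → ℂ) m)
  rintro z ⟨v, rfl⟩
  exact DFunLike.congr_fun key v
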